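/- At z = q⁻¹ the nineteen-vertex R-matrix degenerates to a rank-one operator: R(q⁻¹) = [q][q²] · |s⟩⟨s|, where |s⟩ = |⇑⇓⟩ + |⇓⇑⟩ − |00⟩ ∈ ℂ³⊗ℂ³; that is, R(q⁻¹)v = [q][q²]·⟨s, v⟩·s for all v, where ⟨·,·⟩ is the bilinear form for which the canonical basis of ℂ³⊗ℂ³ is orthonormal. -/

import Mathlib

open Matrix BigOperators Finset

noncomputable section

/-- `[z] = z - z⁻¹`. -/
def br (z : ℂ) : ℂ := z - z⁻¹

/-- Nineteen-vertex R-matrix on ℂ³⊗ℂ³ (basis 0=⇑, 1=0, 2=⇓). -/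
def R19 (q z : ℂ) : Matrix (Fin 3 × Fin 3) (Fin 3 × Fin 3) ℂ :=
  Matrix.of fun p p' =>
    if p = (0,0) ∧ p' = (0,0) then br (q*z) * br (q^2*z)
    else if p = (2,2) ∧ p' = (2,2) then br (q*z) * br (q^2*z)
    else if p = (0,2) ∧ p' = (0,2) then br (q⁻¹*z) * br z
    else if p = (2,0) ∧ p' = (2,0) then br (q⁻¹*z) * br z
    else if p = (0,2) ∧ p' = (2,0) then br q * br (q^2)
    else if p = (2,0) ∧ p' = (0,2) then br q * br (q^2)
    else if p = (0,1) ∧ p' = (0,1) then br z * br (q*z)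
    else if p = (1,0) ∧ p' = (1,0) then br z * br (q*z)
    else if p = (1,2) ∧ p' = (1,2) then br z * br (q*z)
    else if p = (2,1) ∧ p' = (2,1) then br z * br (q*z)
    else if p = (0,1) ∧ p' = (1,0) then br (q^2) * br (q*z)
    else if p = (1,0) ∧ p' = (0,1) then br (q^2) * br (q*z)
    else if p = (1,2) ∧ p' = (2,1) then br (q^2) * br (q*z)
    else if p = (2,1) ∧ p' = (1,2) then br (q^2) * br (q*z)
    else if p = (1,1) ∧ p' = (0,2) then br (q^2) * br z
    else if p = (1,1) ∧ p' = (2,0) then br (q^2) * br z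
    else if p = (0,2) ∧ p' = (1,1) then br (q^2) * br z
    else if p = (2,0) ∧ p' = (1,1) then br (q^2) * br z
    else if p = (1,1) ∧ p' = (1,1) then br z * br (q*z) + br q * br (q^2)
    else 0

/-- The vector `|s⟩ = |⇑⇓⟩ + |⇓⇑⟩ − |00⟩` in ℂ³⊗ℂ³. -/
def svec : Fin 3 × Fin 3 → ℂ := fun p =>
  if p = (0,2) then 1 else if p = (2,0) then 1 else if p = (1,1) then -1 else 0

/-- At `z = q⁻¹` the nineteen-vertex R-matrix degenerates to the rank-one operator
`[q][q²] |s⟩⟨s|` with `|s⟩ = |⇑⇓⟩ + |⇓⇑⟩ − |00⟩`. -/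
theorem stmt7 (q : ℂ) (hq : q ≠ 0) :
    R19 q q⁻¹ = (br q * br (q^2)) • Matrix.vecMulVec svec svec := by
  have hFin : ∀ i : Fin 3, i = 0 ∨ i = 1 ∨ i = 2 := by decide
  have e1 : br (q*q⁻¹) * br (q^2*q⁻¹) = br q * br (q^2) * ((0:ℂ) * 0) := by
    simp only [br]; field_simp; ring
  have e2 : br (q⁻¹*q⁻¹) * br q⁻¹ = br q * br (q^2) * ((1:ℂ) * 1) := by
    simp only [br]; field_simp; try ring
  have e3 : br q * br (q^2) = br q * br (q^2) * ((1:ℂ) * 1) := by ring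
  have e4 : br q⁻¹ * br (q*q⁻¹) = br q * br (q^2) * ((0:ℂ) * 0) := by
    simp only [br]; field_simp; ring
  have e5 : br (q^2) * br (q*q⁻¹) = br q * br (q^2) * ((0:ℂ) * 0) := by
    simp only [br]; field_simp; ring
  have e6 : br (q^2) * br q⁻¹ = br q * br (q^2) * ((-1:ℂ) * 1) := by
    simp only [br]; field_simp; try ring
  have e7 : br (q^2) * br q⁻¹ = br q * br (q^2) * ((1:ℂ) * -1) := by
    simp only [br]; field_simp; try ring
  have e8 : br q⁻¹ * br (q*q⁻¹) + br q * br (q^2) = br q * br (q^2) * ((-1:ℂ) * -1) := by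
    simp only [br]; field_simp; try ring
  have z00 : (0:ℂ) = br q * br (q^2) * ((0:ℂ) * 0) := by ring
  have z01 : (0:ℂ) = br q * br (q^2) * ((0:ℂ) * 1) := by ring
  have z0m : (0:ℂ) = br q * br (q^2) * ((0:ℂ) * -1) := by ring
  have z10 : (0:ℂ) = br q * br (q^2) * ((1:ℂ) * 0) := by ring
  have zm0 : (0:ℂ) = br q * br (q^2) * ((-1:ℂ) * 0) := by ring
  funext p p'
  obtain ⟨a, b⟩ := p
  obtain ⟨c, d⟩ := p'
  rcases hFin a with rfl | rfl | rfl <;> rcases hFin b with rfl | rfl | rfl <;>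
    rcases hFin c with rfl | rfl | rfl <;> rcases hFin d with rfl | rfl | rfl
  · exact e1
  · exact z00
  · exact z01
  · exact z00
  · exact z0m
  · exact z00
  · exact z01
  · exact z00
  · exact z00
  · exact z00
  · exact e4
  · exact z01
  · exact e5
  · exact z0m
  · exact z00
  · exact z01
  · exact z00
  · exact z00
  · exact z10
  · exact z10
  · exact e2
  · exact z10
  · exact e7
  · exact z10
  · exact e3
  · exact z10
  · exact z10
  · exact z00
  · exact e5
  · exact z01
  · exact e4
  · exact z0m
  · exact z00
  · exact z01
  · exact z00
  · exact z00
  · exact zm0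
  · exact zm0
  · exact e6
  · exact zm0
  · exact e8
  · exact zm0
  · exact e6
  · exact zm0
  · exact zm0
  · exact z00
  · exact z00
  · exact z01
  · exact z00
  · exact z0m
  · exact e4
  · exact z01
  · exact e5
  · exact z00
  · exact z10
  · exact z10
  · exact e3
  · exact z10
  · exact e7
  · exact z10
  · exact e2
  · exact z10
  · exact z10
  · exact z00
  · exact z00
  · exact z01
  · exact z00
  · exact z0m
  · exact e5
  · exact z01
  · exact e4
  · exact z00
  · exact z00
  · exact z00
  · exact z01
  · exact z00
  · exact z0m
  · exact z00
  · exact z01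
  · exact z00
  · exact e1

end
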